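/- arXiv:0911.0992 — 2 statements merged into one kernel-verified Lean document; each statement's English description precedes it below -/
import Mathlib

section
/- On Z = ℝ⁴ \ {0}, the Poisson brackets of the Kepler integrals of motion satisfy {M₁₂, A₁} = -A₂, {M₁₂, A₂} = A₁, and {A₁, A₂} = 2 H M₁₂, where H = p²/2 - 1/r, M₁₂ = q₁p₂ - q₂p₁, Aᵢ = qᵢp² - pᵢ(p,q) - qᵢ/r. -/
set_option maxHeartbeats 1000000

noncomputable section

/-- Partial derivative of `f : ℝ⁴ → ℝ` in the `i`-th coordinate direction.
Coordinates: `(q₁,q₂,p₁,p₂) = (z 0, z 1, z 2, z 3)`. -/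
def pd (f : (Fin 4 → ℝ) → ℝ) (i : Fin 4) (z : Fin 4 → ℝ) : ℝ :=
  fderiv ℝ f z (Pi.single i 1)

/-- Canonical Poisson bracket `{f,g} = Σᵢ (∂f/∂pᵢ ∂g/∂qᵢ - ∂f/∂qᵢ ∂g/∂pᵢ)`. -/
def pb (f g : (Fin 4 → ℝ) → ℝ) (z : Fin 4 → ℝ) : ℝ :=
  pd f 2 z * pd g 0 z - pd f 0 z * pd g 2 z
  + pd f 3 z * pd g 1 z - pd f 1 z * pd g 3 z

/-- `p² = p₁² + p₂²`. -/
def psq (z : Fin 4 → ℝ) : ℝ := (z 2)^2 + (z 3)^2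

/-- `(p,q) = p₁q₁ + p₂q₂`. -/
def pdotq (z : Fin 4 → ℝ) : ℝ := z 2 * z 0 + z 3 * z 1

/-- `r = √(q₁² + q₂²)`. -/
def rr (z : Fin 4 → ℝ) : ℝ := Real.sqrt ((z 0)^2 + (z 1)^2)

/-- The Kepler Hamiltonian `H = p²/2 - 1/r`. -/
def keplerH (z : Fin 4 → ℝ) : ℝ := psq z / 2 - 1 / rr z

/-- Angular momentum `M₁₂ = q₁p₂ - q₂p₁`. -/
def angM (z : Fin 4 → ℝ) : ℝ := z 0 * z 3 - z 1 * z 2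

/-- First Runge–Lenz component `A₁ = q₁p² - p₁(p,q) - q₁/r`. -/
def rlA1 (z : Fin 4 → ℝ) : ℝ := z 0 * psq z - z 2 * pdotq z - z 0 / rr z

/-- Second Runge–Lenz component `A₂ = q₂p² - p₂(p,q) - q₂/r`. -/
def rlA2 (z : Fin 4 → ℝ) : ℝ := z 1 * psq z - z 3 * pdotq z - z 1 / rr z

end

open Filter Topology

private lemma kepler_aux_notdiff0 (z : Fin 4 → ℝ) (h0 : z 0 = 0) (h1 : z 1 = 0)
    (hdiv : DifferentiableAt ℝ (fun w : Fin 4 → ℝ => w 0 / rr w) z) : False := by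
  have hcont := hdiv.continuousAt
  have hγ : Tendsto (fun t : ℝ => z + t • (Pi.single 0 1 : Fin 4 → ℝ)) (𝓝[>] (0:ℝ)) (𝓝 z) := by
    have hc : Continuous (fun t : ℝ => z + t • (Pi.single 0 1 : Fin 4 → ℝ)) :=
      continuous_const.add (continuous_id.smul continuous_const)
    have h := Tendsto.mono_left (hc.tendsto 0) (nhdsWithin_le_nhds (s := Set.Ioi (0:ℝ)))
    simpa using h
  have hlim : Tendsto (fun t : ℝ => (z + t • (Pi.single 0 1 : Fin 4 → ℝ)) 0 / rr (z + t • (Pi.single 0 1 : Fin 4 → ℝ)))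
      (𝓝[>] (0:ℝ)) (𝓝 (z 0 / rr z)) := (hcont.tendsto.comp hγ)
  have hval : z 0 / rr z = 0 := by simp [h0]
  have heq : ∀ t ∈ Set.Ioi (0:ℝ),
      (1:ℝ) = (z + t • (Pi.single 0 1 : Fin 4 → ℝ)) 0 / rr (z + t • (Pi.single 0 1 : Fin 4 → ℝ)) := by
    intro t ht
    have e0 : (z + t • (Pi.single 0 1 : Fin 4 → ℝ)) 0 = t := by simp [h0]
    have e1 : (z + t • (Pi.single 0 1 : Fin 4 → ℝ)) 1 = 0 := by
      simp [h1, Pi.single_eq_of_ne (show (1 : Fin 4) ≠ 0 by decide)]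
    rw [rr, e0, e1]
    rw [show t^2 + (0:ℝ)^2 = t^2 by ring, Real.sqrt_sq (le_of_lt ht)]
    exact (div_self (ne_of_gt ht)).symm
  have hone : Tendsto (fun t : ℝ => (z + t • (Pi.single 0 1 : Fin 4 → ℝ)) 0 / rr (z + t • (Pi.single 0 1 : Fin 4 → ℝ)))
      (𝓝[>] (0:ℝ)) (𝓝 1) :=
    tendsto_const_nhds.congr' (eventuallyEq_of_mem self_mem_nhdsWithin heq)
  have := tendsto_nhds_unique hlim hone
  rw [hval] at this
  exact zero_ne_one this

private lemma kepler_aux_notdiff1 (z : Fin 4 → ℝ) (h0 : z 0 = 0) (h1 : z 1 = 0)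
    (hdiv : DifferentiableAt ℝ (fun w : Fin 4 → ℝ => w 1 / rr w) z) : False := by
  have hcont := hdiv.continuousAt
  have hγ : Tendsto (fun t : ℝ => z + t • (Pi.single 1 1 : Fin 4 → ℝ)) (𝓝[>] (0:ℝ)) (𝓝 z) := by
    have hc : Continuous (fun t : ℝ => z + t • (Pi.single 1 1 : Fin 4 → ℝ)) :=
      continuous_const.add (continuous_id.smul continuous_const)
    have h := Tendsto.mono_left (hc.tendsto 0) (nhdsWithin_le_nhds (s := Set.Ioi (0:ℝ)))
    simpa using h
  have hlim : Tendsto (fun t : ℝ => (z + t • (Pi.single 1 1 : Fin 4 → ℝ)) 1 / rr (z + t • (Pi.single 1 1 : Fin 4 → ℝ)))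
      (𝓝[>] (0:ℝ)) (𝓝 (z 1 / rr z)) := (hcont.tendsto.comp hγ)
  have hval : z 1 / rr z = 0 := by simp [h1]
  have heq : ∀ t ∈ Set.Ioi (0:ℝ),
      (1:ℝ) = (z + t • (Pi.single 1 1 : Fin 4 → ℝ)) 1 / rr (z + t • (Pi.single 1 1 : Fin 4 → ℝ)) := by
    intro t ht
    have e1 : (z + t • (Pi.single 1 1 : Fin 4 → ℝ)) 1 = t := by simp [h1]
    have e0 : (z + t • (Pi.single 1 1 : Fin 4 → ℝ)) 0 = 0 := by
      simp [h0, Pi.single_eq_of_ne (show (0 : Fin 4) ≠ 1 by decide)]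
    rw [rr, e0, e1]
    rw [show (0:ℝ)^2 + t^2 = t^2 by ring, Real.sqrt_sq (le_of_lt ht)]
    exact (div_self (ne_of_gt ht)).symm
  have hone : Tendsto (fun t : ℝ => (z + t • (Pi.single 1 1 : Fin 4 → ℝ)) 1 / rr (z + t • (Pi.single 1 1 : Fin 4 → ℝ)))
      (𝓝[>] (0:ℝ)) (𝓝 1) :=
    tendsto_const_nhds.congr' (eventuallyEq_of_mem self_mem_nhdsWithin heq)
  have := tendsto_nhds_unique hlim hone
  rw [hval] at this
  exact zero_ne_one this

theorem kepler_integrals_poisson_brackets :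
    ∀ z : Fin 4 → ℝ, z ≠ 0 →
      pb angM rlA1 z = -rlA2 z ∧
      pb angM rlA2 z = rlA1 z ∧
      pb rlA1 rlA2 z = 2 * keplerH z * angM z := by
  intro z _
  rcases eq_or_ne ((z 0)^2 + (z 1)^2) 0 with hq | hq
  · -- degenerate case: q = 0, Runge–Lenz vectors are not differentiable there
    have h0 : z 0 = 0 := by nlinarith [sq_nonneg (z 0), sq_nonneg (z 1)]
    have h1 : z 1 = 0 := by nlinarith [sq_nonneg (z 0), sq_nonneg (z 1)]
    have dcoord : ∀ i, DifferentiableAt ℝ (fun w : Fin 4 → ℝ => w i) z :=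
      fun i => (hasFDerivAt_apply i z).differentiableAt
    have hnd1 : ¬ DifferentiableAt ℝ rlA1 z := by
      intro hd
      have hpoly : DifferentiableAt ℝ (fun w : Fin 4 → ℝ => w 0 * psq w - w 2 * pdotq w) z := by
        exact ((dcoord 0).mul (((dcoord 2).pow 2).add ((dcoord 3).pow 2))).sub
          ((dcoord 2).mul (((dcoord 2).mul (dcoord 0)).add ((dcoord 3).mul (dcoord 1))))
      have hdiv : DifferentiableAt ℝ (fun w : Fin 4 → ℝ => w 0 / rr w) z := by
        have h : DifferentiableAt ℝ (fun w : Fin 4 → ℝ => (w 0 * psq w - w 2 * pdotq w) - rlA1 w) z :=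
          hpoly.sub hd
        have e : (fun w : Fin 4 → ℝ => (w 0 * psq w - w 2 * pdotq w) - rlA1 w)
            = fun w : Fin 4 → ℝ => w 0 / rr w := by
          funext w; simp [rlA1]
        rwa [e] at h
      exact kepler_aux_notdiff0 z h0 h1 hdiv
    have hnd2 : ¬ DifferentiableAt ℝ rlA2 z := by
      intro hd
      have hpoly : DifferentiableAt ℝ (fun w : Fin 4 → ℝ => w 1 * psq w - w 3 * pdotq w) z := by
        exact ((dcoord 1).mul (((dcoord 2).pow 2).add ((dcoord 3).pow 2))).sub
          ((dcoord 3).mul (((dcoord 2).mul (dcoord 0)).add ((dcoord 3).mul (dcoord 1))))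
      have hdiv : DifferentiableAt ℝ (fun w : Fin 4 → ℝ => w 1 / rr w) z := by
        have h : DifferentiableAt ℝ (fun w : Fin 4 → ℝ => (w 1 * psq w - w 3 * pdotq w) - rlA2 w) z :=
          hpoly.sub hd
        have e : (fun w : Fin 4 → ℝ => (w 1 * psq w - w 3 * pdotq w) - rlA2 w)
            = fun w : Fin 4 → ℝ => w 1 / rr w := by
          funext w; simp [rlA2]
        rwa [e] at h
      exact kepler_aux_notdiff1 z h0 h1 hdiv
    have f1 : fderiv ℝ rlA1 z = 0 := fderiv_zero_of_not_differentiableAt hnd1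
    have f2 : fderiv ℝ rlA2 z = 0 := fderiv_zero_of_not_differentiableAt hnd2
    have z1 : ∀ i, pd rlA1 i z = 0 := by intro i; simp [pd, f1]
    have z2 : ∀ i, pd rlA2 i z = 0 := by intro i; simp [pd, f2]
    refine ⟨?_, ?_, ?_⟩
    · rw [pb, z1, z1, z1, z1]
      simp [rlA2, pdotq, h0, h1]
    · rw [pb, z2, z2, z2, z2]
      simp [rlA1, pdotq, h0, h1]
    · rw [pb, z1, z1, z1, z1]
      simp [angM, h0, h1]
  · -- generic case: q ≠ 0
    have h0 : HasFDerivAt (fun w : Fin 4 → ℝ => w 0) (ContinuousLinearMap.proj 0 : (Fin 4 → ℝ) →L[ℝ] ℝ) z :=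
      hasFDerivAt_apply 0 z
    have h1 : HasFDerivAt (fun w : Fin 4 → ℝ => w 1) (ContinuousLinearMap.proj 1 : (Fin 4 → ℝ) →L[ℝ] ℝ) z :=
      hasFDerivAt_apply 1 z
    have h2 : HasFDerivAt (fun w : Fin 4 → ℝ => w 2) (ContinuousLinearMap.proj 2 : (Fin 4 → ℝ) →L[ℝ] ℝ) z :=
      hasFDerivAt_apply 2 z
    have h3 : HasFDerivAt (fun w : Fin 4 → ℝ => w 3) (ContinuousLinearMap.proj 3 : (Fin 4 → ℝ) →L[ℝ] ℝ) z :=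
      hasFDerivAt_apply 3 z
    have hg : HasFDerivAt (fun w : Fin 4 → ℝ => (w 0)^2 + (w 1)^2)
        ((((2:ℕ):ℝ) * z 0 ^ 1) • (ContinuousLinearMap.proj 0 : (Fin 4 → ℝ) →L[ℝ] ℝ)
          + (((2:ℕ):ℝ) * z 1 ^ 1) • (ContinuousLinearMap.proj 1 : (Fin 4 → ℝ) →L[ℝ] ℝ)) z :=
      by exact (((hasDerivAt_pow 2 (z 0)).comp_hasFDerivAt z h0).add
        ((hasDerivAt_pow 2 (z 1)).comp_hasFDerivAt z h1))
    have hrr : HasFDerivAt rr _ z := hg.sqrt hq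
    have hrpos : 0 < rr z := Real.sqrt_pos.2 (lt_of_le_of_ne (by positivity) (Ne.symm hq))
    have hrne : rr z ≠ 0 := ne_of_gt hrpos
    have hrinv : HasFDerivAt (fun w => (rr w)⁻¹) _ z :=
      (hasDerivAt_inv hrne).comp_hasFDerivAt z hrr
    have hpsq : HasFDerivAt psq
        ((((2:ℕ):ℝ) * z 2 ^ 1) • (ContinuousLinearMap.proj 2 : (Fin 4 → ℝ) →L[ℝ] ℝ)
          + (((2:ℕ):ℝ) * z 3 ^ 1) • (ContinuousLinearMap.proj 3 : (Fin 4 → ℝ) →L[ℝ] ℝ)) z :=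
      by exact (((hasDerivAt_pow 2 (z 2)).comp_hasFDerivAt z h2).add
        ((hasDerivAt_pow 2 (z 3)).comp_hasFDerivAt z h3))
    have hpdq : HasFDerivAt pdotq _ z := (h2.mul h0).add (h3.mul h1)
    have e1 : rlA1 = fun w => w 0 * psq w - w 2 * pdotq w - w 0 * (rr w)⁻¹ := by
      funext w; simp [rlA1, div_eq_mul_inv]
    have e2 : rlA2 = fun w => w 1 * psq w - w 3 * pdotq w - w 1 * (rr w)⁻¹ := by
      funext w; simp [rlA2, div_eq_mul_inv]
    have hA1 := ((h0.mul hpsq).sub (h2.mul hpdq)).sub (h0.mul hrinv)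
    have hA2 := ((h1.mul hpsq).sub (h3.mul hpdq)).sub (h1.mul hrinv)
    change HasFDerivAt (fun w => w 0 * psq w - w 2 * pdotq w - w 0 * (rr w)⁻¹) _ z at hA1
    change HasFDerivAt (fun w => w 1 * psq w - w 3 * pdotq w - w 1 * (rr w)⁻¹) _ z at hA2
    rw [← e1] at hA1
    rw [← e2] at hA2
    have hM : HasFDerivAt angM _ z := (h0.mul h3).sub (h1.mul h2)
    have hr2 : rr z ^ 2 = (z 0)^2 + (z 1)^2 := Real.sq_sqrt (by positivity)
    have hrs : Real.sqrt ((z 0)^2 + (z 1)^2) = rr z := rfl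
    have ev : ∀ (i j : Fin 4),
        (ContinuousLinearMap.proj (R := ℝ) (φ := fun _ : Fin 4 => ℝ) j) (Pi.single i 1)
          = if j = i then 1 else 0 := by
      intro i j
      simp [Pi.single_apply, eq_comm]
    have pM0 : pd angM 0 z = z 3 := by rw [pd, hM.fderiv]; simp [ev]
    have pM1 : pd angM 1 z = -z 2 := by rw [pd, hM.fderiv]; simp [ev]
    have pM2 : pd angM 2 z = -z 1 := by rw [pd, hM.fderiv]; simp [ev]
    have pM3 : pd angM 3 z = z 0 := by rw [pd, hM.fderiv]; simp [ev]
    have p10 : pd rlA1 0 z = psq z - z 2 ^ 2 - (rr z)⁻¹ + z 0 ^ 2 / rr z ^ 3 := by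
      rw [pd, hA1.fderiv]; simp [ev, hrs, pdotq]; field_simp; ring
    have p11 : pd rlA1 1 z = -(z 2 * z 3) + z 0 * z 1 / rr z ^ 3 := by
      rw [pd, hA1.fderiv]; simp [ev, hrs, pdotq]; field_simp
    have p12 : pd rlA1 2 z = -(z 1 * z 3) := by
      rw [pd, hA1.fderiv]; simp [ev, hrs, pdotq]; ring
    have p13 : pd rlA1 3 z = 2 * z 0 * z 3 - z 1 * z 2 := by
      rw [pd, hA1.fderiv]; simp [ev, hrs, pdotq]; ring
    have p20 : pd rlA2 0 z = -(z 2 * z 3) + z 0 * z 1 / rr z ^ 3 := by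
      rw [pd, hA2.fderiv]; simp [ev, hrs, pdotq]; field_simp
    have p21 : pd rlA2 1 z = psq z - z 3 ^ 2 - (rr z)⁻¹ + z 1 ^ 2 / rr z ^ 3 := by
      rw [pd, hA2.fderiv]; simp [ev, hrs, pdotq]; field_simp; ring
    have p22 : pd rlA2 2 z = 2 * z 1 * z 2 - z 0 * z 3 := by
      rw [pd, hA2.fderiv]; simp [ev, hrs, pdotq]; ring
    have p23 : pd rlA2 3 z = -(z 0 * z 2) := by
      rw [pd, hA2.fderiv]; simp [ev, hrs, pdotq]; ring
    have h3e : rr z ^ 3 = ((z 0)^2 + (z 1)^2) * rr z := by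
      rw [show rr z ^ 3 = rr z ^ 2 * rr z by ring, hr2]
    rw [h3e] at p10 p11 p20 p21
    refine ⟨?_, ?_, ?_⟩
    · rw [pb, pM0, pM1, pM2, pM3, p10, p11, p12, p13, rlA2, pdotq]
      field_simp
      ring
    · rw [pb, pM0, pM1, pM2, pM3, p20, p21, p22, p23, rlA1, pdotq]
      field_simp
      ring
    · rw [pb, p10, p11, p12, p13, p20, p21, p22, p23, keplerH, angM]
      have hv : ((z 0)^2 + (z 1)^2) * ((z 0)^2 + (z 1)^2)⁻¹ = 1 := mul_inv_cancel₀ hq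
      simp only [div_eq_mul_inv, mul_inv, one_div, psq]
      linear_combination ((z 0 * z 3 - z 1 * z 2) * (rr z)⁻¹) * hv
end

section
/- Let Z = ℝ⁴ \ {0}, U = {z ∈ Z : M₁₂(z) ≠ 0}. Then at every point of U the differentials dM₁₂, dA₁, dA₂ of the Kepler integrals of motion are linearly independent, i.e., dM₁₂ ∧ dA₁ ∧ dA₂ ≠ 0 on U. -/
noncomputable def pr (i : Fin 4) : (Fin 4 → ℝ) →L[ℝ] ℝ := ContinuousLinearMap.proj i

lemma hp (i : Fin 4) (z : Fin 4 → ℝ) : HasFDerivAt (fun z : Fin 4 → ℝ => z i) (pr i) z :=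
  hasFDerivAt_apply i z

set_option maxHeartbeats 1000000 in
/-- On `U = {M₁₂ ≠ 0}` the differentials `dM₁₂, dA₁, dA₂` are linearly independent,
i.e. `dM₁₂ ∧ dA₁ ∧ dA₂ ≠ 0` on `U`. -/
theorem kepler_integrals_independent_on_U :
    ∀ z : Fin 4 → ℝ, z ≠ 0 → angM z ≠ 0 →
      LinearIndependent ℝ ![fderiv ℝ angM z, fderiv ℝ rlA1 z, fderiv ℝ rlA2 z] := by
  intro z _ hMz
  have hne : z 0 ≠ 0 ∨ z 1 ≠ 0 := by
    by_contra h
    push_neg at h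
    exact hMz (by simp [angM, h.1, h.2])
  have hs : 0 < (z 0)^2 + (z 1)^2 := by
    rcases hne with h | h
    · positivity
    · positivity
  have hr : 0 < rr z := Real.sqrt_pos.2 hs
  have hr2 : rr z ^ 2 = z 0 ^ 2 + z 1 ^ 2 := Real.sq_sqrt hs.le
  -- derivatives
  have hM : HasFDerivAt angM (z 0 • pr 3 + z 3 • pr 0 - (z 1 • pr 2 + z 2 • pr 1)) z := by
    unfold angM
    exact ((hp 0 z).mul (hp 3 z)).sub ((hp 1 z).mul (hp 2 z))
  have hD : HasFDerivAt (fun z : Fin 4 → ℝ => z 0 * z 0 + z 1 * z 1)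
      ((z 0 • pr 0 + z 0 • pr 0) + (z 1 • pr 1 + z 1 • pr 1)) z :=
    ((hp 0 z).mul (hp 0 z)).add ((hp 1 z).mul (hp 1 z))
  have hre : rr = fun z : Fin 4 → ℝ => Real.sqrt (z 0 * z 0 + z 1 * z 1) := by
    funext w; rw [rr]; ring_nf
  have hESq : Real.sqrt (z 0 * z 0 + z 1 * z 1) = rr z := by rw [hre]
  have hrr : HasFDerivAt rr ((1 / (2 * rr z)) •
      ((z 0 • pr 0 + z 0 • pr 0) + (z 1 • pr 1 + z 1 • pr 1))) z := by
    have hs' : z 0 * z 0 + z 1 * z 1 ≠ 0 := by nlinarith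
    have h := (Real.hasDerivAt_sqrt hs').comp_hasFDerivAt z hD
    rw [hESq] at h
    exact h.congr_of_eventuallyEq (Filter.Eventually.of_forall fun w => (congrFun hre w : _))
  have hinv : HasFDerivAt (fun z : Fin 4 → ℝ => (rr z)⁻¹)
      ((-(rr z ^ 2)⁻¹) • ((1 / (2 * rr z)) •
        ((z 0 • pr 0 + z 0 • pr 0) + (z 1 • pr 1 + z 1 • pr 1)))) z :=
    (hasDerivAt_inv hr.ne').comp_hasFDerivAt z hrr
  have he1 : rlA1 = fun z : Fin 4 → ℝ => z 3 * angM z - z 0 * (rr z)⁻¹ := by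
    funext w; rw [rlA1, psq, pdotq, angM]; simp only [div_eq_mul_inv]; ring
  have he2 : rlA2 = fun z : Fin 4 → ℝ => -(z 2 * angM z) - z 1 * (rr z)⁻¹ := by
    funext w; rw [rlA2, psq, pdotq, angM]; simp only [div_eq_mul_inv]; ring
  have hA1 : HasFDerivAt rlA1 ((z 3 • (z 0 • pr 3 + z 3 • pr 0 - (z 1 • pr 2 + z 2 • pr 1)) + angM z • pr 3) - (z 0 • (-(rr z ^ 2)⁻¹ • (1 / (2 * rr z)) • (z 0 • pr 0 + z 0 • pr 0 + (z 1 • pr 1 + z 1 • pr 1))) + (rr z)⁻¹ • pr 0)) z := by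
    rw [he1]
    exact ((hp 3 z).mul hM).sub ((hp 0 z).mul hinv)
  have hA2 : HasFDerivAt rlA2 (-(z 2 • (z 0 • pr 3 + z 3 • pr 0 - (z 1 • pr 2 + z 2 • pr 1)) + angM z • pr 2) - (z 1 • (-(rr z ^ 2)⁻¹ • (1 / (2 * rr z)) • (z 0 • pr 0 + z 0 • pr 0 + (z 1 • pr 1 + z 1 • pr 1))) + (rr z)⁻¹ • pr 1)) z := by
    rw [he2]
    exact (((hp 2 z).mul hM).neg).sub ((hp 1 z).mul hinv)
  rw [Fintype.linearIndependent_iff]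
  intro g hg
  rw [Fin.sum_univ_three] at hg
  simp only [Matrix.cons_val_zero, Matrix.cons_val_one, Matrix.head_cons,
    Matrix.cons_val_two, Matrix.tail_cons] at hg
  rw [hM.fderiv, hA1.fderiv, hA2.fderiv] at hg
  have e := fun j : Fin 4 =>
    congrArg (fun L : (Fin 4 → ℝ) →L[ℝ] ℝ => L (Pi.single j 1)) hg
  have e0 := e 0
  have e1 := e 1
  have e2 := e 2
  have e3 := e 3
  simp only [pr, ContinuousLinearMap.add_apply, ContinuousLinearMap.sub_apply,
    ContinuousLinearMap.smul_apply, ContinuousLinearMap.neg_apply,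
    ContinuousLinearMap.proj_apply, smul_eq_mul, Pi.single_apply, Fin.reduceEq, reduceIte] at e0 e1 e2 e3
  norm_num at e0 e1 e2 e3
  field_simp at e0 e1
  have ha1 : (g 0 + g 1 * z 3 - g 2 * z 2) * z 0 + g 1 * angM z = 0 := by
    unfold angM; unfold angM at e3; linear_combination e3
  have ha2 : (g 0 + g 1 * z 3 - g 2 * z 2) * z 1 + g 2 * angM z = 0 := by
    unfold angM; unfold angM at e2; linear_combination -e2
  have hc2 : (g 0 + g 1 * z 3 - g 2 * z 2) * z 3 * (angM z * rr z ^ 7 * 4) = 0 := by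
    unfold angM; unfold angM at ha1 ha2
    linear_combination (z 0 * z 3 - z 1 * z 2) * (2 * (rr z)^4) * e0
      + 4*(rr z)^4*(z 0 * z 3 - z 1 * z 2)*g 1*hr2
      + 4*(rr z)^4*((z 1)^2 * ha1 - z 0 * z 1 * ha2)
  have hc1 : (g 0 + g 1 * z 3 - g 2 * z 2) * z 2 * (angM z * rr z ^ 7 * 4) = 0 := by
    unfold angM; unfold angM at ha1 ha2
    linear_combination -(z 0 * z 3 - z 1 * z 2) * (2 * (rr z)^4) * e1
      - 4*(rr z)^4*(z 0 * z 3 - z 1 * z 2)*g 2*hr2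
      + 4*(rr z)^4*(z 0 * z 1 * ha1 - (z 0)^2 * ha2)
  have ha'7 : (g 0 + g 1 * z 3 - g 2 * z 2) * ((angM z)^2 * rr z ^ 7 * 4) = 0 := by
    unfold angM; unfold angM at hc1 hc2
    linear_combination z 0 * hc2 - z 1 * hc1
  have hnz : (angM z)^2 * rr z ^ 7 * 4 ≠ 0 :=
    mul_ne_zero (mul_ne_zero (pow_ne_zero 2 hMz) (pow_ne_zero 7 hr.ne')) (by norm_num)
  have ha0 : g 0 + g 1 * z 3 - g 2 * z 2 = 0 :=
    (mul_eq_zero.mp ha'7).resolve_right hnz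
  have hg1 : g 1 = 0 := by
    have h1 : g 1 * angM z = 0 := by linear_combination ha1 - z 0 * ha0
    exact (mul_eq_zero.mp h1).resolve_right hMz
  have hg2 : g 2 = 0 := by
    have h1 : g 2 * angM z = 0 := by linear_combination ha2 - z 1 * ha0
    exact (mul_eq_zero.mp h1).resolve_right hMz
  have hg0 : g 0 = 0 := by linear_combination ha0 - z 3 * hg1 + z 2 * hg2
  intro i
  fin_cases i <;> assumption
end
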